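/- arXiv:2407.17574 — 8 statements merged into one kernel-verified Lean document; each statement's English description precedes it below -/
import Mathlib

section
/- The function f : ℝ → ℝ with f(x) = 1 for x ≥ 0 and f(x) = 0 for x < 0 satisfies SLip f(x₀) = 0 for every x₀ ∈ ℝ, where SLip is the pointwise semi-Lipschitz constant computed with the usual metric on the domain and the quasi-metric d_u(s,t) = max{t-s,0} on the target; in particular f is pointwise semi-Lipschitz but not continuous at 0 for the usual metric. -/
open Filter Topology

/-- The Heaviside-type function has pointwise semi-Lipschitz constant 0 everywhere
(target (ℝ,d_u)), but is not continuous at 0 for the usual metric. -/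
theorem heaviside_SLip_zero_not_continuous :
    let f : ℝ → ℝ := fun x => if 0 ≤ x then 1 else 0
    (∀ x₀ : ℝ,
      Filter.limsup (fun x => ENNReal.ofReal (max (f x - f x₀) 0 / |x - x₀|)) (𝓝[≠] x₀) = 0)
    ∧ ¬ ContinuousAt f 0 := by
  intro f
  constructor
  · intro x₀
    have hev : ∀ᶠ x in 𝓝[≠] x₀,
        (fun x => ENNReal.ofReal (max (f x - f x₀) 0 / |x - x₀|)) x = (fun _ => (0:ENNReal)) x := by
      rcases le_or_gt 0 x₀ with h | h
      · filter_upwards with x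
        have hfx : f x ≤ 1 := by simp only [f]; split <;> norm_num
        have : f x₀ = 1 := by simp [f, h]
        simp [this, max_eq_right (by linarith : f x - 1 ≤ 0)]
      · have : ∀ᶠ x in 𝓝 x₀, x < 0 := Filter.Tendsto.eventually_lt_const h Filter.tendsto_id
        filter_upwards [nhdsWithin_le_nhds this] with x hx
        have hfx : f x = 0 := by simp [f, not_le.mpr hx]
        have hfx0 : f x₀ = 0 := by simp [f, not_le.mpr h]
        simp [hfx, hfx0]
    rw [limsup_congr hev, limsup_const]
  · intro h
    have ht : Tendsto f (𝓝 0) (𝓝 1) := by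
      have : f 0 = 1 := by simp [f]
      simpa [ContinuousAt, this] using h
    have hseq : Tendsto (fun n : ℕ => -(1 / (n+1) : ℝ)) atTop (𝓝 0) := by
      rw [show (0:ℝ) = -0 by ring]
      exact (tendsto_one_div_add_atTop_nhds_zero_nat).neg
    have := (ht.comp hseq)
    have heq : (f ∘ fun n : ℕ => -(1 / (n+1) : ℝ)) = fun _ => (0:ℝ) := by
      funext n
      have : ¬ (0:ℝ) ≤ -(1 / (n+1)) := by
        simp only [not_le, neg_neg, Left.neg_neg_iff]
        positivity
      simp [f, this]; positivity
    rw [heq] at this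
    have := tendsto_nhds_unique this tendsto_const_nhds
    norm_num at this
end

section
/- (Length lemma) Let (X,d) be a metric space and f : X → ℝ a continuous function with K := sup_{x∈X} SLip f(x) < ∞ (where SLip is computed with target (ℝ, d_u)). If γ : [a,b] → X is a continuous rectifiable curve with γ(a) = x and γ(b) = y, then f(y) - f(x) ≤ K · ℓ(γ). -/
open scoped ENNReal
open Filter Topology

/-- The pointwise semi-Lipschitz constant of f : X → ℝ at x₀, with target (ℝ, d_u). -/
noncomputable def SLipE {X : Type*} [MetricSpace X] (f : X → ℝ) (x₀ : X) : ℝ≥0∞ :=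
  sInf {α : ℝ≥0∞ | ∃ δ > (0:ℝ), ∀ x, dist x₀ x < δ →
    ENNReal.ofReal (f x - f x₀) ≤ α * ENNReal.ofReal (dist x₀ x)}

/-- Local real-valued estimate extracted from `SLipE f x₀ ≤ K`. -/
lemma slip_local {X : Type*} [MetricSpace X] (f : X → ℝ) (x₀ : X) (K ε : ℝ)
    (hK0 : 0 ≤ K) (hε : 0 < ε) (h : SLipE f x₀ ≤ ENNReal.ofReal K) :
    ∃ δ > (0:ℝ), ∀ x, dist x₀ x < δ → f x - f x₀ ≤ (K + ε) * dist x₀ x := by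
  have hlt : SLipE f x₀ < ENNReal.ofReal (K + ε) :=
    lt_of_le_of_lt h (by
      rw [ENNReal.ofReal_lt_ofReal_iff (by linarith)]; linarith)
  rw [SLipE, sInf_lt_iff] at hlt
  obtain ⟨α, ⟨δ, hδ, hα⟩, hαlt⟩ := hlt
  refine ⟨δ, hδ, fun x hx => ?_⟩
  have h1 : ENNReal.ofReal (f x - f x₀) ≤ ENNReal.ofReal (K + ε) * ENNReal.ofReal (dist x₀ x) :=
    (hα x hx).trans (mul_le_mul_left hαlt.le _)
  rw [← ENNReal.ofReal_mul (by linarith)] at h1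
  rcases le_or_gt (f x - f x₀) 0 with h2 | h2
  · exact h2.trans (mul_nonneg (by linarith) dist_nonneg)
  · rwa [ENNReal.ofReal_le_ofReal_iff (mul_nonneg (by linarith) dist_nonneg)] at h1

/-- (Length lemma) If f is continuous with sup SLip f ≤ K and γ is a continuous
rectifiable curve from x to y, then f(y) - f(x) ≤ K·ℓ(γ). -/
theorem length_lemma {X : Type*} [MetricSpace X] (f : X → ℝ) (hf : Continuous f)
    (K : ℝ) (hK0 : 0 ≤ K) (hK : ∀ x, SLipE f x ≤ ENNReal.ofReal K)
    (a b : ℝ) (hab : a ≤ b) (γ : ℝ → X) (hγ : ContinuousOn γ (Set.Icc a b))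
    (hrect : eVariationOn γ (Set.Icc a b) ≠ ⊤) :
    ENNReal.ofReal (f (γ b) - f (γ a)) ≤ ENNReal.ofReal K * eVariationOn γ (Set.Icc a b) := by
  set V : ℝ → ℝ := fun t => (eVariationOn γ (Set.Icc a t)).toReal with hV
  have hfin : ∀ t, t ≤ b → eVariationOn γ (Set.Icc a t) ≠ ⊤ := fun t ht =>
    ne_top_of_le_ne_top hrect (eVariationOn.mono γ (Set.Icc_subset_Icc le_rfl ht))
  -- key real claim
  have key : ∀ ε > (0:ℝ), f (γ b) - f (γ a) ≤ (K + ε) * V b := by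
    intro ε hε
    set S : Set ℝ := {t | t ∈ Set.Icc a b ∧ f (γ t) - f (γ a) ≤ (K + ε) * V t} with hS
    have haS : a ∈ S := by
      constructor
      · exact ⟨le_rfl, hab⟩
      · have : (0:ℝ) ≤ (K + ε) * V a :=
          mul_nonneg (by linarith) ENNReal.toReal_nonneg
        simpa using this
    have hSne : S.Nonempty := ⟨a, haS⟩
    have hSbdd : BddAbove S := ⟨b, fun t ht => ht.1.2⟩
    set c := sSup S with hc
    have hcmem : c ∈ Set.Icc a b :=
      ⟨le_csSup hSbdd haS, csSup_le hSne (fun t ht => ht.1.2)⟩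
    -- c ∈ S
    have hcS : c ∈ S := by
      obtain ⟨u, hu_mono, hu_tend, hu_mem⟩ := exists_seq_tendsto_sSup hSne hSbdd
      refine ⟨hcmem, ?_⟩
      have hgc : Tendsto (fun n => f (γ (u n))) atTop (𝓝 (f (γ c))) := by
        have hγc : ContinuousWithinAt γ (Set.Icc a b) c := hγ c hcmem
        have hu' : Tendsto u atTop (𝓝[Set.Icc a b] c) :=
          tendsto_nhdsWithin_of_tendsto_nhds_of_eventually_within u hu_tend
            (Filter.Eventually.of_forall (fun n => (hu_mem n).1))
        exact (hf.continuousAt.tendsto.comp (hγc.tendsto.comp hu'))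
      refine le_of_tendsto (hgc.sub_const (f (γ a))) (Filter.Eventually.of_forall fun n => ?_)
      refine (hu_mem n).2.trans ?_
      have hVmono : V (u n) ≤ V c := by
        apply ENNReal.toReal_mono (hfin c hcmem.2)
        exact eVariationOn.mono γ (Set.Icc_subset_Icc le_rfl (le_csSup hSbdd (hu_mem n)))
      exact mul_le_mul_of_nonneg_left hVmono (by linarith)
    -- c = b
    rcases eq_or_lt_of_le hcmem.2 with hcb | hcb
    · have := hcS.2; rwa [hcb] at this
    · exfalso
      obtain ⟨δ, hδ, hloc⟩ := slip_local f (γ c) K ε hK0 hε (hK (γ c))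
      have hγc : ContinuousWithinAt γ (Set.Icc a b) c := hγ c hcmem
      rw [Metric.continuousWithinAt_iff] at hγc
      obtain ⟨η, hη, hηs⟩ := hγc δ hδ
      set t := min b (c + η / 2) with ht
      have hct : c < t := lt_min hcb (by linarith)
      have htb : t ≤ b := min_le_left _ _
      have htmem : t ∈ Set.Icc a b := ⟨hcmem.1.trans hct.le, htb⟩
      have hdist : dist t c < η := by
        rw [Real.dist_eq, abs_of_pos (by linarith)]
        have : t ≤ c + η / 2 := min_le_right _ _
        linarith
      have hdγ : dist (γ c) (γ t) < δ := by
        have := hηs htmem hdist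
        rwa [dist_comm] at this
      have hstep : f (γ t) - f (γ c) ≤ (K + ε) * dist (γ c) (γ t) := hloc _ hdγ
      -- dist (γ c) (γ t) ≤ V t - V c
      have hvar : dist (γ c) (γ t) ≤ V t - V c := by
        have hsum : eVariationOn γ (Set.Icc a c) + eVariationOn γ (Set.Icc c t)
            = eVariationOn γ (Set.Icc a t) := by
          have := eVariationOn.Icc_add_Icc γ (s := Set.univ) hcmem.1 hct.le (Set.mem_univ c)
          simpa using this
        have hedist : edist (γ c) (γ t) ≤ eVariationOn γ (Set.Icc c t) :=
          eVariationOn.edist_le γ (Set.left_mem_Icc.2 hct.le) (Set.right_mem_Icc.2 hct.le)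
        have hfc : eVariationOn γ (Set.Icc a c) ≠ ⊤ := hfin c hcmem.2
        have hft : eVariationOn γ (Set.Icc a t) ≠ ⊤ := hfin t htb
        have hfct : eVariationOn γ (Set.Icc c t) ≠ ⊤ := by
          intro h; rw [← hsum, h] at hft; simp at hft
        have h1 : dist (γ c) (γ t) ≤ (eVariationOn γ (Set.Icc c t)).toReal := by
          rw [dist_edist]
          exact ENNReal.toReal_mono hfct hedist
        have h2 : V t = V c + (eVariationOn γ (Set.Icc c t)).toReal := by
          rw [hV]
          simp only []
          rw [← hsum, ENNReal.toReal_add hfc hfct]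
        linarith
      have htS : t ∈ S := by
        refine ⟨htmem, ?_⟩
        have h3 : f (γ t) - f (γ a) ≤ (K + ε) * V c + (K + ε) * (V t - V c) := by
          have := hcS.2
          have h4 : (K + ε) * dist (γ c) (γ t) ≤ (K + ε) * (V t - V c) :=
            mul_le_mul_of_nonneg_left hvar (by linarith)
          linarith
        calc f (γ t) - f (γ a) ≤ (K + ε) * V c + (K + ε) * (V t - V c) := h3
          _ = (K + ε) * V t := by ring
      exact absurd (le_csSup hSbdd htS) (not_le.2 hct)
  -- conclude
  have hVb : 0 ≤ V b := ENNReal.toReal_nonneg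
  have hreal : f (γ b) - f (γ a) ≤ K * V b := by
    refine le_of_forall_pos_le_add fun ε' hε' => ?_
    have hε : 0 < ε' / (V b + 1) := div_pos hε' (by linarith)
    have := key _ hε
    have h5 : (ε' / (V b + 1)) * V b ≤ ε' := by
      rw [div_mul_eq_mul_div, div_le_iff₀ (by linarith)]
      nlinarith
    nlinarith
  calc ENNReal.ofReal (f (γ b) - f (γ a)) ≤ ENNReal.ofReal (K * V b) :=
        ENNReal.ofReal_le_ofReal hreal
    _ = ENNReal.ofReal K * ENNReal.ofReal (V b) := ENNReal.ofReal_mul hK0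
    _ = ENNReal.ofReal K * eVariationOn γ (Set.Icc a b) := by
        rw [hV]; simp only []; rw [ENNReal.ofReal_toReal hrect]
end

section
/- If (X,d) is a quasi-convex metric space with constant K, then every continuous function f : X → ℝ with sup_{x∈X} SLip f(x) =: L < ∞ (SLip computed with target (ℝ,d_u)) is (K·L)-Lipschitz; in particular LIP(X) = D(X) = D_SL(X) as sets of real functions. -/
open scoped ENNReal
open Filter Topology

private lemma slip_point {X : Type*} [MetricSpace X] (f : X → ℝ) (x : X) {L L' : ℝ}
    (hSL : SLipE f x ≤ ENNReal.ofReal L) (hL : 0 ≤ L) (h : L < L') :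
    ∃ δ > (0:ℝ), ∀ x', dist x x' < δ →
      ENNReal.ofReal (f x' - f x) ≤ ENNReal.ofReal L' * ENNReal.ofReal (dist x x') := by
  have h1 : SLipE f x < ENNReal.ofReal L' :=
    lt_of_le_of_lt hSL ((ENNReal.ofReal_lt_ofReal_iff_of_nonneg hL).mpr h)
  rw [SLipE, sInf_lt_iff] at h1
  obtain ⟨α, ⟨δ, hδ, hα⟩, hlt⟩ := h1
  exact ⟨δ, hδ, fun x' hx' => (hα x' hx').trans (mul_le_mul_left hlt.le _)⟩

private lemma curve_bound {X : Type*} [MetricSpace X] (f : X → ℝ) (hf : Continuous f)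
    {L L' : ℝ} (hL : 0 ≤ L) (hLL' : L < L')
    (hSL : ∀ x, SLipE f x ≤ ENNReal.ofReal L)
    (γ : ℝ → X) (hγ : ContinuousOn γ (Set.Icc 0 1)) :
    ENNReal.ofReal (f (γ 1) - f (γ 0)) ≤ ENNReal.ofReal L' * eVariationOn γ (Set.Icc 0 1) := by
  set S : Set ℝ := {t | t ∈ Set.Icc (0:ℝ) 1 ∧
      ENNReal.ofReal (f (γ t) - f (γ 0)) ≤ ENNReal.ofReal L' * eVariationOn γ (Set.Icc 0 t)}
    with hSdef
  have h0S : (0:ℝ) ∈ S := ⟨⟨le_refl 0, zero_le_one⟩, by simp⟩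
  have hbdd : BddAbove S := ⟨1, fun t ht => ht.1.2⟩
  set T := sSup S with hTdef
  have hT0 : 0 ≤ T := le_csSup hbdd h0S
  have hT1 : T ≤ 1 := csSup_le ⟨0, h0S⟩ fun t ht => ht.1.2
  have hTmem : T ∈ Set.Icc (0:ℝ) 1 := ⟨hT0, hT1⟩
  have hcont : ContinuousWithinAt (fun t => f (γ t)) (Set.Icc 0 1) T :=
    (hf.comp_continuousOn hγ) T hTmem
  obtain ⟨u, hu_mono, hu_tend, hu_mem⟩ := exists_seq_tendsto_sSup ⟨0, h0S⟩ hbdd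
  have hTS : T ∈ S := by
    refine ⟨hTmem, ?_⟩
    have hu_nhds : Tendsto u atTop (𝓝[Set.Icc (0:ℝ) 1] T) :=
      tendsto_nhdsWithin_of_tendsto_nhds_of_eventually_within u hu_tend
        (Eventually.of_forall fun n => (hu_mem n).1)
    have hlim : Tendsto (fun n => ENNReal.ofReal (f (γ (u n)) - f (γ 0))) atTop
        (𝓝 (ENNReal.ofReal (f (γ T) - f (γ 0)))) :=
      (ENNReal.continuous_ofReal.tendsto _).comp
        ((hcont.tendsto.comp hu_nhds).sub_const _)
    refine le_of_tendsto hlim (Eventually.of_forall fun n => ?_)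
    refine (hu_mem n).2.trans (mul_le_mul_right (eVariationOn.mono γ ?_) _)
    exact Set.Icc_subset_Icc le_rfl (le_csSup hbdd (hu_mem n))
  have hT_eq : T = 1 := by
    by_contra hne
    have hTlt : T < 1 := lt_of_le_of_ne hT1 hne
    obtain ⟨δ, hδ, hpt⟩ := slip_point f (γ T) (hSL _) hL hLL'
    obtain ⟨η, hη, hball⟩ := Metric.continuousWithinAt_iff.mp (hγ T hTmem) δ hδ
    set t' := min 1 (T + η/2) with ht'def
    have hTT' : T < t' := lt_min hTlt (by linarith)
    have ht'mem : t' ∈ Set.Icc (0:ℝ) 1 := ⟨le_trans hT0 hTT'.le, min_le_left _ _⟩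
    have hdist : dist t' T < η := by
      rw [Real.dist_eq, abs_of_pos (by linarith : (0:ℝ) < t' - T)]
      have h2 : t' ≤ T + η/2 := min_le_right _ _
      linarith
    have hd : dist (γ t') (γ T) < δ := hball ht'mem hdist
    have hstep : ENNReal.ofReal (f (γ t') - f (γ T)) ≤
        ENNReal.ofReal L' * eVariationOn γ (Set.Icc T t') := by
      refine (hpt (γ t') (by rwa [dist_comm])).trans ?_
      apply mul_le_mul_right
      rw [← edist_dist]
      exact eVariationOn.edist_le γ (Set.left_mem_Icc.mpr hTT'.le)
        (Set.right_mem_Icc.mpr hTT'.le)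
    have ht'S : t' ∈ S := by
      refine ⟨ht'mem, ?_⟩
      calc ENNReal.ofReal (f (γ t') - f (γ 0))
          ≤ ENNReal.ofReal (f (γ t') - f (γ T)) + ENNReal.ofReal (f (γ T) - f (γ 0)) := by
            rw [show f (γ t') - f (γ 0) = (f (γ t') - f (γ T)) + (f (γ T) - f (γ 0)) by ring]
            exact ENNReal.ofReal_add_le
        _ ≤ ENNReal.ofReal L' * eVariationOn γ (Set.Icc T t') +
            ENNReal.ofReal L' * eVariationOn γ (Set.Icc 0 T) := add_le_add hstep hTS.2
        _ = ENNReal.ofReal L' * (eVariationOn γ (Set.Icc 0 T) + eVariationOn γ (Set.Icc T t')) := by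
            rw [mul_add, add_comm]
        _ = ENNReal.ofReal L' * eVariationOn γ (Set.Icc 0 t') := by
            congr 1
            have h3 := eVariationOn.Icc_add_Icc γ (s := Set.univ) hT0 hTT'.le (Set.mem_univ T)
            simpa using h3
    exact absurd (le_csSup hbdd ht'S) (not_le.mpr hTT')
  rw [hT_eq] at hTS
  exact hTS.2

/-- On a quasi-convex metric space with constant K, every continuous function with
sup SLip f ≤ L is (K·L)-Lipschitz. -/
theorem lipschitz_of_quasiconvex {X : Type*} [MetricSpace X] (K L : ℝ)
    (hK : 0 < K) (hL : 0 ≤ L)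
    (hqc : ∀ x y : X, ∃ γ : ℝ → X, ContinuousOn γ (Set.Icc 0 1) ∧ γ 0 = x ∧ γ 1 = y ∧
      eVariationOn γ (Set.Icc 0 1) ≤ ENNReal.ofReal (K * dist x y))
    (f : X → ℝ) (hf : Continuous f) (hSL : ∀ x, SLipE f x ≤ ENNReal.ofReal L) :
    LipschitzWith (Real.toNNReal (K * L)) f := by
  have key : ∀ x y : X, f y - f x ≤ K * L * dist x y := by
    intro x y
    have h : ∀ ε > (0:ℝ), f y - f x ≤ (L + ε) * (K * dist x y) := by
      intro ε hε
      obtain ⟨γ, hγc, hγ0, hγ1, hγv⟩ := hqc x y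
      have hcb := curve_bound f hf hL (lt_add_of_pos_right L hε) hSL γ hγc
      have hen : ENNReal.ofReal (f y - f x) ≤ ENNReal.ofReal ((L + ε) * (K * dist x y)) := by
        have h4 := hcb.trans (mul_le_mul_right hγv _)
        rw [hγ0, hγ1] at h4
        rwa [ENNReal.ofReal_mul (by positivity)]
      by_cases hfy : f y - f x ≤ 0
      · exact hfy.trans (by positivity)
      · push_neg at hfy
        exact (ENNReal.ofReal_le_ofReal_iff (by positivity)).mp hen
    by_cases hd : dist x y = 0
    · have hxy : x = y := dist_eq_zero.mp hd
      simp [hxy, hd]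
    · have hdpos : 0 < dist x y := lt_of_le_of_ne dist_nonneg (Ne.symm hd)
      by_contra hlt
      push_neg at hlt
      set ε := (f y - f x - K * L * dist x y) / 2 with hεdef
      have hεpos : 0 < ε := by simp only [hεdef]; linarith
      have h2 := h (ε / (K * dist x y)) (by positivity)
      have h3 : (L + ε / (K * dist x y)) * (K * dist x y) = K * L * dist x y + ε := by
        field_simp
      rw [h3] at h2
      linarith
  apply LipschitzWith.of_dist_le_mul
  intro x y
  have hc : ((Real.toNNReal (K * L) : NNReal) : ℝ) = K * L :=
    Real.coe_toNNReal _ (by positivity)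
  rw [hc, Real.dist_eq, abs_sub_le_iff]
  constructor
  · have := key y x; rwa [dist_comm] at this
  · exact key x y
end

section
/- Let ℝ carry the quasi-metric d_F(x,x') = |x-x'| + φ(x) - φ(x') where φ(x) = ∫₀ˣ t²/(1+t²) dt. Then d_F is a quasi-metric on ℝ and its index of symmetry is 0; indeed the ratio d_F(x,x+1)/d_F(x+1,x) = (arctan(x+1)-arctan(x))/(2 + arctan(x) - arctan(x+1)) tends to 0 as x → +∞. -/
open Filter Topology

lemma cont_inv : Continuous fun t : ℝ => 1 / (1 + t ^ 2) :=
  continuous_const.div (by continuity) (fun t => by positivity)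

lemma phi_eq (x : ℝ) : (∫ t in (0:ℝ)..x, t ^ 2 / (1 + t ^ 2)) = x - Real.arctan x := by
  have h : ∀ t : ℝ, t ^ 2 / (1 + t ^ 2) = 1 - 1 / (1 + t ^ 2) := by
    intro t
    have : (1 : ℝ) + t ^ 2 ≠ 0 := by positivity
    field_simp
    ring
  simp_rw [h]
  rw [intervalIntegral.integral_sub intervalIntegrable_const
      (cont_inv.intervalIntegrable _ _), integral_one_div_one_add_sq]
  simp

lemma arctan_sub_le {a b : ℝ} (h : a ≤ b) : Real.arctan b - Real.arctan a ≤ b - a := by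
  have h1 : Real.arctan b - Real.arctan a = ∫ t in a..b, 1 / (1 + t ^ 2) :=
    (integral_one_div_one_add_sq).symm
  have h2 : (∫ t in a..b, 1 / (1 + t ^ 2)) ≤ ∫ t in a..b, (1:ℝ) := by
    apply intervalIntegral.integral_mono_on h (cont_inv.intervalIntegrable _ _)
      intervalIntegrable_const
    intro t _
    rw [div_le_one (by positivity)]
    nlinarith [sq_nonneg t]
  have h3 : (∫ t in a..b, (1:ℝ)) = b - a := by simp
  linarith [h1 ▸ h2, h3 ▸ h2]

/-- The Randers-type quasi-metric d_F(x,x') = |x-x'| + φ(x) - φ(x') on ℝ, with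
φ(x) = ∫₀ˣ t²/(1+t²) dt, is a quasi-metric whose index of symmetry is 0; indeed the
ratio d_F(x,x+1)/d_F(x+1,x) equals
(arctan(x+1)-arctan x)/(2+arctan x - arctan(x+1)) which tends to 0 as x → ∞. -/
theorem randers_index_zero :
    let φ : ℝ → ℝ := fun x => ∫ t in (0:ℝ)..x, t ^ 2 / (1 + t ^ 2)
    let dF : ℝ → ℝ → ℝ := fun x y => |x - y| + φ x - φ y
    (∀ x, dF x x = 0) ∧ (∀ x y, 0 ≤ dF x y) ∧
    (∀ x y, dF x y = 0 → dF y x = 0 → x = y) ∧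
    (∀ x y z, dF x z ≤ dF x y + dF y z) ∧
    (∀ x : ℝ, dF x (x + 1) / dF (x + 1) x
        = (Real.arctan (x + 1) - Real.arctan x) / (2 + Real.arctan x - Real.arctan (x + 1))) ∧
    Filter.Tendsto (fun x => dF x (x + 1) / dF (x + 1) x) Filter.atTop (𝓝 0) ∧
    sInf {r : ℝ | ∃ x y, 0 < dF x y ∧ r = dF y x / dF x y} = 0 := by
  intro φ dF
  have hd : ∀ x y, dF x y = |x - y| + (x - Real.arctan x) - (y - Real.arctan y) := by
    intro x y; simp only [dF, φ, phi_eq]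
  have hnonneg : ∀ x y, 0 ≤ dF x y := by
    intro x y
    rw [hd]
    rcases le_total x y with h | h
    · rw [abs_of_nonpos (by linarith)]
      have := Real.arctan_strictMono.monotone h
      linarith
    · rw [abs_of_nonneg (by linarith)]
      have := arctan_sub_le h
      linarith
  have e1 : ∀ x : ℝ, dF x (x + 1) = Real.arctan (x + 1) - Real.arctan x := by
    intro x
    rw [hd, show x - (x + 1) = (-1 : ℝ) by ring, abs_neg, abs_one]; ring
  have e2 : ∀ x : ℝ, dF (x + 1) x = 2 + Real.arctan x - Real.arctan (x + 1) := by
    intro x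
    rw [hd, show x + 1 - x = (1 : ℝ) by ring, abs_one]; ring
  have hpos : ∀ x : ℝ, 0 < dF (x + 1) x := by
    intro x
    rw [e2]
    have := arctan_sub_le (show x ≤ x + 1 by linarith)
    linarith
  have ha : Tendsto Real.arctan atTop (𝓝 (Real.pi / 2)) :=
    tendsto_nhds_of_tendsto_nhdsWithin Real.tendsto_arctan_atTop
  have hb : Tendsto (fun x : ℝ => Real.arctan (x + 1)) atTop (𝓝 (Real.pi / 2)) :=
    ha.comp (tendsto_atTop_add_const_right _ 1 tendsto_id)
  have hnum : Tendsto (fun x : ℝ => Real.arctan (x + 1) - Real.arctan x) atTop (𝓝 0) := by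
    simpa using hb.sub ha
  have hden : Tendsto (fun x : ℝ => 2 + Real.arctan x - Real.arctan (x + 1)) atTop (𝓝 2) := by
    have := (tendsto_const_nhds (x := (2:ℝ)) (f := atTop)).add ha |>.sub hb
    simpa using this
  have h6 : Tendsto (fun x => dF x (x + 1) / dF (x + 1) x) atTop (𝓝 0) := by
    simp only [e1, e2]
    have := hnum.div hden two_ne_zero
    rw [zero_div] at this
    exact this
  set S := {r : ℝ | ∃ x y, 0 < dF x y ∧ r = dF y x / dF x y} with hS
  have hmem : ∀ x : ℝ, dF x (x + 1) / dF (x + 1) x ∈ S := fun x => ⟨x + 1, x, hpos x, rfl⟩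
  have hne : S.Nonempty := ⟨_, hmem 0⟩
  have hlb : ∀ r ∈ S, (0:ℝ) ≤ r := by
    rintro r ⟨x, y, hxy, rfl⟩
    exact div_nonneg (hnonneg y x) (hnonneg x y)
  have hbdd : BddBelow S := ⟨0, hlb⟩
  refine ⟨fun x => by rw [hd]; simp, hnonneg, ?_, ?_, fun x => by rw [e1, e2], h6, ?_⟩
  · intro x y h1 h2
    rw [hd] at h1 h2
    rw [abs_sub_comm] at h2
    have : |x - y| = 0 := by linarith [abs_nonneg (x - y)]
    have := abs_eq_zero.mp this
    linarith
  · intro x y z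
    simp only [dF]
    have := abs_sub_le x y z
    linarith
  · refine le_antisymm ?_ (le_csInf hne hlb)
    by_contra h
    push_neg at h
    obtain ⟨x, hx⟩ := ((tendsto_order.1 h6).2 _ h).exists
    exact absurd (csInf_le hbdd (hmem x)) (not_le.mpr hx)
end

section
/- Let (X,d) be a pointwise quasi-symmetric quasi-metric space. Then the identity map id : (X,d) → (X,dˢ) is a C_SL-homeomorphism: both id and its inverse are pointwise semi-Lipschitz and continuous (from the forward topology of the domain quasi-metric to the topology of dˢ). Conversely, if id : (X,d) → (X,dˢ) is a C_SL-homeomorphism then (X,d) is pointwise quasi-symmetric. -/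
/-- A quasi-metric on a set X. -/
structure QuasiMetric (X : Type*) where
  d : X → X → ℝ
  nonneg : ∀ x y, 0 ≤ d x y
  refl : ∀ x, d x x = 0
  sep : ∀ x y, d x y = 0 → d y x = 0 → x = y
  triangle : ∀ x y z, d x z ≤ d x y + d y z

/-- (X,d) is pointwise quasi-symmetric iff the identity id : (X,d) → (X,dˢ) is a
C_SL-homeomorphism: id and id⁻¹ are pointwise semi-Lipschitz at every point and
continuous (forward topology on the domain, symmetrized topology on the target). -/
theorem pointwise_quasi_symmetric_iff_id_CSL_homeo {X : Type*} (q : QuasiMetric X) :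
    (∀ x₀ : X, ∃ α ≥ (0:ℝ), ∃ δ > (0:ℝ), ∀ x, q.d x₀ x < δ → q.d x x₀ ≤ α * q.d x₀ x)
    ↔
    ((∀ x₀ : X, ∃ α ≥ (0:ℝ), ∃ δ > (0:ℝ), ∀ x, q.d x₀ x < δ →
        max (q.d x₀ x) (q.d x x₀) ≤ α * q.d x₀ x)
    ∧ (∀ x₀ : X, ∀ ε > (0:ℝ), ∃ δ > (0:ℝ), ∀ x, q.d x₀ x < δ →
        max (q.d x₀ x) (q.d x x₀) < ε)
    ∧ (∀ x₀ : X, ∃ α ≥ (0:ℝ), ∃ δ > (0:ℝ), ∀ x, max (q.d x₀ x) (q.d x x₀) < δ →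
        q.d x₀ x ≤ α * max (q.d x₀ x) (q.d x x₀))
    ∧ (∀ x₀ : X, ∀ ε > (0:ℝ), ∃ δ > (0:ℝ), ∀ x, max (q.d x₀ x) (q.d x x₀) < δ →
        max (q.d x₀ x) (q.d x x₀) < ε)) := by
  constructor
  · intro h
    refine ⟨?_, ?_, ?_, ?_⟩
    · intro x₀
      obtain ⟨α, hα, δ, hδ, hx⟩ := h x₀
      refine ⟨α + 1, by linarith, δ, hδ, fun x hxd => ?_⟩
      have h1 := hx x hxd
      have h0 := q.nonneg x₀ x
      have : q.d x₀ x ≤ (α + 1) * q.d x₀ x := by nlinarith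
      exact max_le this (by nlinarith)
    · intro x₀ ε hε
      obtain ⟨α, hα, δ, hδ, hx⟩ := h x₀
      refine ⟨min δ (ε / (α + 1)), lt_min hδ (by positivity), fun x hxd => ?_⟩
      have h1 := hx x (lt_of_lt_of_le hxd (min_le_left _ _))
      have h2 : q.d x₀ x < ε / (α + 1) := lt_of_lt_of_le hxd (min_le_right _ _)
      have h0 := q.nonneg x₀ x
      have h3 : (α + 1) * q.d x₀ x < ε := by
        have := (lt_div_iff₀ (by linarith : (0:ℝ) < α + 1)).mp h2
        linarith [mul_comm (α + 1) (q.d x₀ x)]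
      exact max_lt (by nlinarith) (by nlinarith)
    · intro x₀
      exact ⟨1, zero_le_one, 1, one_pos, fun x _ => by
        simpa using le_max_left (q.d x₀ x) (q.d x x₀)⟩
    · intro x₀ ε hε
      exact ⟨ε, hε, fun x hxd => hxd⟩
  · rintro ⟨h1, -, -, -⟩ x₀
    obtain ⟨α, hα, δ, hδ, hx⟩ := h1 x₀
    exact ⟨α, hα, δ, hδ, fun x hxd =>
      le_trans (le_max_right (q.d x₀ x) (q.d x x₀)) (hx x hxd)⟩
end

section
/- Let (X,d) be a pointwise quasi-symmetric quasi-metric space, and fix q ∈ X. Then the function f_q(y) = min{d(q,y), 1} is pointwise semi-Lipschitz from (X,d) to (ℝ,|·|): for every y₀ there exists α such that SLip f_q(y₀) ≤ max{1,α}, where α is the quasi-symmetry constant at y₀. In particular, if σ(y₀) ≤ K for all y₀, then sup_y SLip f_q(y) ≤ max{1,K}. -/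
lemma min_one_lip (a b : ℝ) : |min a 1 - min b 1| ≤ |a - b| := by
  rcases le_total a 1 with h1 | h1 <;> rcases le_total b 1 with h2 | h2 <;>
    simp [min_eq_left, min_eq_right, h1, h2, abs_le] <;>
    cases abs_le.mp (le_refl |a - b|) <;> constructor <;>
    cases abs_nonneg (a - b) |>.lt_or_eq <;>
    cases le_abs_self (a - b) |>.lt_or_eq <;>
    cases neg_abs_le (a - b) |>.lt_or_eq <;> linarith [le_abs_self (a-b), neg_abs_le (a-b)]

lemma key {X : Type*} (q : QuasiMetric X) (p y₀ : X) (α : ℝ) (hα : 0 ≤ α)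
    (δ : ℝ) (hδ : 0 < δ) (hq : ∀ y, q.d y₀ y < δ → q.d y y₀ ≤ α * q.d y₀ y) :
    ∀ y, q.d y₀ y < δ →
      |min (q.d p y) 1 - min (q.d p y₀) 1| ≤ max 1 α * q.d y₀ y := by
  intro y hy
  have h1 := q.triangle p y₀ y
  have h2 := q.triangle p y y₀
  have h3 := hq y hy
  have hd := q.nonneg y₀ y
  have habs : |q.d p y - q.d p y₀| ≤ max 1 α * q.d y₀ y := by
    rw [abs_le]
    constructor
    · have : α * q.d y₀ y ≤ max 1 α * q.d y₀ y :=
        mul_le_mul_of_nonneg_right (le_max_right _ _) hd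
      nlinarith
    · have : q.d y₀ y ≤ max 1 α * q.d y₀ y := by
        nlinarith [le_max_left (1:ℝ) α]
      linarith
  exact le_trans (min_one_lip _ _) habs

/-- On a pointwise quasi-symmetric quasi-metric space, f_q(y) = min{d(q,y),1} is
pointwise semi-Lipschitz to (ℝ,|·|), with SLip f_q(y₀) ≤ max{1, α} for any
quasi-symmetry constant α at y₀; uniformly if σ ≤ K globally. -/
theorem fq_pointwise_semiLipschitz {X : Type*} (q : QuasiMetric X)
    (hpqs : ∀ y₀ : X, ∃ α ≥ (0:ℝ), ∃ δ > (0:ℝ), ∀ y,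
      q.d y₀ y < δ → q.d y y₀ ≤ α * q.d y₀ y)
    (p : X) :
    let f : X → ℝ := fun y => min (q.d p y) 1
    (∀ y₀ : X, ∀ α ≥ (0:ℝ),
      (∃ δ > (0:ℝ), ∀ y, q.d y₀ y < δ → q.d y y₀ ≤ α * q.d y₀ y) →
      ∃ δ > (0:ℝ), ∀ y, q.d y₀ y < δ → |f y - f y₀| ≤ max 1 α * q.d y₀ y)
    ∧ (∀ K ≥ (0:ℝ),
      (∀ y₀ : X, ∃ δ > (0:ℝ), ∀ y, q.d y₀ y < δ → q.d y y₀ ≤ K * q.d y₀ y) →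
      ∀ y₀ : X, ∃ δ > (0:ℝ), ∀ y, q.d y₀ y < δ → |f y - f y₀| ≤ max 1 K * q.d y₀ y) := by
  intro f
  constructor
  · rintro y₀ α hα ⟨δ, hδ, hq⟩
    exact ⟨δ, hδ, key q p y₀ α hα δ hδ hq⟩
  · intro K hK hall y₀
    obtain ⟨δ, hδ, hq⟩ := hall y₀
    exact ⟨δ, hδ, key q p y₀ K hK δ hδ hq⟩
end

section
/- Let (X,d) be a uniformly locally radially quasi-convex metric space with constant K, let f : X → ℝ be continuous with sup_x SLip f(x) < ∞, and let γ : [a,b] → X be a rectifiable curve parametrized by arc-length. Then for almost every t ∈ [a,b] the function f ∘ γ is differentiable, and |f(γ(a)) - f(γ(b))| ≤ ∫_a^b |∂f|⁺(γ(t)) dt; i.e., the ascendent slope |∂f|⁺ is an upper gradient of f. -/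
open scoped ENNReal NNReal
open Filter Topology MeasureTheory

/-- The ascendent metric slope |∂f|⁺(x), valued in [0,∞]. -/
noncomputable def slopePlus {X : Type*} [MetricSpace X] (f : X → ℝ) (x : X) : ℝ≥0∞ :=
  Filter.limsup (fun y => ENNReal.ofReal (max (f y - f x) 0 / dist x y)) (𝓝[≠] x)

section Aux

lemma slope_local {X : Type*} [MetricSpace X] (f : X → ℝ) (x : X) (r : ℝ)
    (h : slopePlus f x < ENNReal.ofReal r) :
    ∃ δ > 0, ∀ y, dist x y < δ → f y - f x ≤ r * dist x y := by
  have hr : 0 < r := by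
    by_contra hr
    rw [ENNReal.ofReal_eq_zero.2 (le_of_not_gt hr)] at h
    exact ENNReal.not_lt_zero h
  have hev : ∀ᶠ y in 𝓝[≠] x,
      ENNReal.ofReal (max (f y - f x) 0 / dist x y) < ENNReal.ofReal r :=
    Filter.eventually_lt_of_limsup_lt h
  rw [eventually_nhdsWithin_iff] at hev
  rw [Metric.eventually_nhds_iff] at hev
  obtain ⟨δ, hδ, H⟩ := hev
  refine ⟨δ, hδ, fun y hy => ?_⟩
  by_cases hyx : y = x
  · simp [hyx]
  · have hd : 0 < dist x y := dist_pos.2 fun e => hyx e.symm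
    have := H (y := y) (by rwa [dist_comm]) hyx
    rw [ENNReal.ofReal_lt_ofReal_iff hr] at this
    have h2 : max (f y - f x) 0 / dist x y < r := this
    have h3 : f y - f x ≤ max (f y - f x) 0 := le_max_left _ _
    calc f y - f x ≤ max (f y - f x) 0 := h3
      _ = max (f y - f x) 0 / dist x y * dist x y := by field_simp
      _ ≤ r * dist x y := by nlinarith
lemma abs_deriv_le {G : ℝ → ℝ} {t r : ℝ} (hr : 0 ≤ r) (hG : DifferentiableAt ℝ G t)
    (h : ∀ᶠ z in 𝓝 t, G z - G t ≤ r * |z - t|) : |deriv G t| ≤ r := by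
  have ht : Tendsto (slope G t) (𝓝[≠] t) (𝓝 (deriv G t)) :=
    hasDerivAt_iff_tendsto_slope.mp hG.hasDerivAt
  have hup : deriv G t ≤ r := by
    have h1 : Tendsto (slope G t) (𝓝[>] t) (𝓝 (deriv G t)) :=
      ht.mono_left (nhdsWithin_mono _ (fun z hz => ne_of_gt hz))
    refine le_of_tendsto h1 ?_
    filter_upwards [nhdsWithin_le_nhds h, self_mem_nhdsWithin] with z hz (hz2 : t < z)
    rw [slope_def_field]
    rw [div_le_iff₀ (by linarith)]
    calc G z - G t ≤ r * |z - t| := hz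
      _ = r * (z - t) := by rw [abs_of_pos (by linarith)]
  have hlo : -r ≤ deriv G t := by
    have h1 : Tendsto (slope G t) (𝓝[<] t) (𝓝 (deriv G t)) :=
      ht.mono_left (nhdsWithin_mono _ (fun z hz => ne_of_lt hz))
    refine ge_of_tendsto h1 ?_
    filter_upwards [nhdsWithin_le_nhds h, self_mem_nhdsWithin] with z hz (hz2 : z < t)
    rw [slope_def_field]
    rw [le_div_iff_of_neg (by linarith)]
    calc G z - G t ≤ r * |z - t| := hz
      _ = -r * (z - t) := by rw [abs_of_neg (by linarith)]; ring
  rw [abs_le]; exact ⟨hlo, hup⟩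

lemma onesided (g : ℝ → ℝ) (a b M : ℝ) (hg : ContinuousOn g (Set.Icc a b))
    (hloc : ∀ x ∈ Set.Icc a b, ∀ ε > 0, ∀ᶠ z in 𝓝 x,
      z ∈ Set.Icc a b → g z - g x ≤ (M + ε) * |z - x|) :
    ∀ s ∈ Set.Icc a b, ∀ t ∈ Set.Icc a b, s ≤ t → g t - g s ≤ M * (t - s) := by
  intro s hs t ht hst
  have hsub : Set.Icc s t ⊆ Set.Icc a b := Set.Icc_subset_Icc hs.1 ht.2
  have H : ∀ ε > 0, g t - g s ≤ (M + ε) * (t - s) := by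
    intro ε hε
    have key : ∀ ⦃x⦄, x ∈ Set.Icc s t → g x ≤ g s + (M + ε) * (x - s) := by
      refine image_le_of_liminf_slope_right_le_deriv_boundary (B' := fun _ => M + ε)
        (hg.mono hsub) (by simp) ?_ (fun x hx => ?_) (fun x hx r hr => ?_)
      · exact (continuousOn_const.add (continuousOn_const.mul
          (continuousOn_id.sub continuousOn_const)))
      · simpa using (((hasDerivWithinAt_id x (Set.Ici x)).sub_const s).const_mul
          (M + ε)).const_add (g s)
      · have hxab : x ∈ Set.Icc a b := hsub ⟨hx.1, hx.2.le⟩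
        have h1 := hloc x hxab ε hε
        refine ((?_ : ∀ᶠ z in 𝓝[>] x, slope g x z < r).frequently)
        filter_upwards [nhdsWithin_le_nhds h1, nhdsWithin_le_nhds (Iio_mem_nhds hx.2),
          self_mem_nhdsWithin] with z hz (hz2 : z < t) (hz3 : x < z)
        have hzab : z ∈ Set.Icc a b := ⟨hs.1.trans (hx.1.trans hz3.le), hz2.le.trans ht.2⟩
        have h4 : g z - g x ≤ (M + ε) * (z - x) := by
          have := hz hzab
          rwa [abs_of_pos (by linarith)] at this
        rw [slope_def_field]
        calc (g z - g x) / (z - x) ≤ M + ε := by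
              rw [div_le_iff₀ (by linarith)]; exact h4
          _ < r := hr
    have := key (x := t) ⟨hst, le_rfl⟩
    linarith
  rcases eq_or_lt_of_le hst with rfl | hlt
  · simp
  · refine le_of_forall_pos_le_add (fun η hη => ?_)
    have hpos : 0 < t - s + 1 := by linarith
    have hε : 0 < η / (t - s + 1) := div_pos hη hpos
    calc g t - g s ≤ (M + η / (t - s + 1)) * (t - s) := H _ hε
      _ = M * (t - s) + η / (t - s + 1) * (t - s) := by ring
      _ ≤ M * (t - s) + η := by
          have : η / (t - s + 1) * (t - s) ≤ η := by
            rw [div_mul_eq_mul_div, div_le_iff₀ hpos]; nlinarith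
          linarith

lemma lipOn (g : ℝ → ℝ) (a b M : ℝ) (hM : 0 ≤ M) (hab : a ≤ b)
    (hg : ContinuousOn g (Set.Icc a b))
    (hloc : ∀ x ∈ Set.Icc a b, ∀ ε > 0, ∀ᶠ z in 𝓝 x,
      z ∈ Set.Icc a b → g z - g x ≤ (M + ε) * |z - x|) :
    LipschitzOnWith (Real.toNNReal M) g (Set.Icc a b) := by
  have refl_mem : ∀ x ∈ Set.Icc a b, a + b - x ∈ Set.Icc a b := by
    intro x hx; exact ⟨by linarith [hx.2], by linarith [hx.1]⟩
  set gR : ℝ → ℝ := fun z => g (a + b - z) with hgR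
  have hgRc : ContinuousOn gR (Set.Icc a b) :=
    hg.comp ((continuous_const.sub continuous_id).continuousOn) refl_mem
  have hgRloc : ∀ x ∈ Set.Icc a b, ∀ ε > 0, ∀ᶠ z in 𝓝 x,
      z ∈ Set.Icc a b → gR z - gR x ≤ (M + ε) * |z - x| := by
    intro x hx ε hε
    have hx' := refl_mem x hx
    have H := hloc (a + b - x) hx' ε hε
    have hcont : Tendsto (fun z : ℝ => a + b - z) (𝓝 x) (𝓝 (a + b - x)) :=
      (continuous_const.sub continuous_id).tendsto x
    filter_upwards [hcont.eventually H] with z hz hzab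
    have := hz (refl_mem z hzab)
    have habs : |a + b - z - (a + b - x)| = |z - x| := by
      rw [show a + b - z - (a + b - x) = -(z - x) by ring, abs_neg]
    rwa [habs] at this
  have key := onesided g a b M hg hloc
  have keyr := onesided gR a b M hgRc hgRloc
  rw [lipschitzOnWith_iff_dist_le_mul]
  intro x hx y hy
  rw [Real.dist_eq, Real.dist_eq, Real.coe_toNNReal M hM]
  have e : ∀ z, gR (a + b - z) = g z := fun z => by simp [hgR]
  rcases le_total y x with hyx | hxy
  · rw [abs_of_nonneg (by linarith : (0:ℝ) ≤ x - y), abs_le]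
    constructor
    · have h1 := keyr (a + b - x) (refl_mem x hx) (a + b - y) (refl_mem y hy) (by linarith)
      rw [e, e] at h1
      have : (a + b - y) - (a + b - x) = x - y := by ring
      rw [this] at h1
      linarith
    · have := key y hy x hx hyx; linarith
  · rw [abs_of_nonpos (by linarith : x - y ≤ 0), abs_le]
    constructor
    · have := key x hx y hy hxy; linarith
    · have h1 := keyr (a + b - y) (refl_mem y hy) (a + b - x) (refl_mem x hx) (by linarith)
      rw [e, e] at h1
      have : (a + b - x) - (a + b - y) = y - x := by ring
      rw [this] at h1
      linarith

lemma mono_ftc (q : ℝ → ℝ) (L : ℝ≥0) (hq : LipschitzWith L q) (hmono : Monotone q)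
    (a b : ℝ) (hab : a ≤ b) : ∫ t in Set.Icc a b, deriv q t ≤ q b - q a := by
  have hqc : Continuous q := hq.continuous
  have hqm : Measurable q := hqc.measurable
  -- deriv is everywhere nonneg (junk value 0 otherwise)
  have hd0 : ∀ t, 0 ≤ deriv q t := by
    intro t
    by_cases h : DifferentiableAt ℝ q t
    · have hslope : Tendsto (slope q t) (𝓝[≠] t) (𝓝 (deriv q t)) :=
        hasDerivAt_iff_tendsto_slope.mp h.hasDerivAt
      refine ge_of_tendsto hslope ?_
      filter_upwards [self_mem_nhdsWithin] with z (hz : z ≠ t)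
      rw [slope_def_field]
      rcases lt_or_gt_of_ne hz with h1 | h1
      · have h2 : q z - q t ≤ 0 := sub_nonpos.2 (hmono h1.le)
        rw [← neg_div_neg_eq]
        apply div_nonneg <;> linarith
      · apply div_nonneg
        · simpa using hmono h1.le
        · linarith
    · simp [deriv_zero_of_not_differentiableAt h]
  set d : ℕ → ℝ := fun n => 1 / (n + 1) with hd
  have hdpos : ∀ n, 0 < d n := fun n => by positivity
  set u : ℕ → ℝ → ℝ := fun n t => (q (t + d n) - q t) / d n with hu
  have hu0 : ∀ n t, 0 ≤ u n t := fun n t =>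
    div_nonneg (sub_nonneg.2 (hmono (by linarith [hdpos n]))) (hdpos n).le
  have hucont : ∀ n, Continuous (u n) := fun n =>
    ((hqc.comp (continuous_id.add continuous_const)).sub hqc).div_const _
  -- a.e. convergence of ofReal (u n t) to ofReal (deriv q t)
  have hae : ∀ᵐ t ∂(volume.restrict (Set.Icc a b)),
      ENNReal.ofReal (deriv q t) = Filter.liminf (fun n => ENNReal.ofReal (u n t)) Filter.atTop := by
    refine ae_restrict_of_ae ?_
    filter_upwards [hq.ae_differentiableAt_real] with t ht
    have hslope : Tendsto (slope q t) (𝓝[≠] t) (𝓝 (deriv q t)) :=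
      hasDerivAt_iff_tendsto_slope.mp ht.hasDerivAt
    have hseq : Tendsto (fun n => t + d n) Filter.atTop (𝓝[≠] t) := by
      rw [tendsto_nhdsWithin_iff]
      constructor
      · have : Tendsto (fun n : ℕ => d n) Filter.atTop (𝓝 0) := by
          simpa [hd] using tendsto_one_div_add_atTop_nhds_zero_nat (𝕜 := ℝ)
        simpa using tendsto_const_nhds.add this
      · exact Filter.Eventually.of_forall fun n => by
          simp only [Set.mem_compl_iff, Set.mem_singleton_iff]
          intro hc
          nlinarith [hdpos n, congrArg (· - t) hc]
    have h1 : Tendsto (fun n => u n t) Filter.atTop (𝓝 (deriv q t)) := by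
      refine (hslope.comp hseq).congr fun n => ?_
      rw [Function.comp_apply, slope_def_field]
      simp [hu]
    have h2 : Tendsto (fun n => ENNReal.ofReal (u n t)) Filter.atTop
        (𝓝 (ENNReal.ofReal (deriv q t))) :=
      (ENNReal.continuous_ofReal.tendsto _).comp h1
    exact h2.liminf_eq.symm
  -- Fatou
  have fatou : ∫⁻ t in Set.Icc a b, ENNReal.ofReal (deriv q t) ≤
      Filter.liminf (fun n => ∫⁻ t in Set.Icc a b, ENNReal.ofReal (u n t)) Filter.atTop := by
    calc ∫⁻ t in Set.Icc a b, ENNReal.ofReal (deriv q t)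
        = ∫⁻ t in Set.Icc a b, Filter.liminf (fun n => ENNReal.ofReal (u n t)) Filter.atTop :=
          lintegral_congr_ae hae
      _ ≤ _ := lintegral_liminf_le fun n =>
          (ENNReal.measurable_ofReal.comp (hucont n).measurable)
  -- compute the integrals of u n
  have compute : ∀ n, ∫⁻ t in Set.Icc a b, ENNReal.ofReal (u n t) ≤
      ENNReal.ofReal (q (b + d n) - q a) := by
    intro n
    have hint : IntegrableOn (u n) (Set.Icc a b) := (hucont n).integrableOn_Icc
    have h1 : ∫⁻ t in Set.Icc a b, ENNReal.ofReal (u n t) = ENNReal.ofReal (∫ t in Set.Icc a b, u n t) :=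
      (MeasureTheory.ofReal_integral_eq_lintegral_ofReal hint
        (Filter.Eventually.of_forall fun t => hu0 n t)).symm
    rw [h1]
    apply ENNReal.ofReal_le_ofReal
    -- real computation
    have hiq : ∀ c e : ℝ, IntervalIntegrable q volume c e := fun c e => hqc.intervalIntegrable _ _
    have e1 : ∫ t in Set.Icc a b, u n t = (∫ t in a..b, (q (t + d n) - q t)) / d n := by
      rw [MeasureTheory.integral_Icc_eq_integral_Ioc, ← intervalIntegral.integral_of_le hab]
      rw [← intervalIntegral.integral_div]
    rw [e1]
    have e2 : ∫ t in a..b, (q (t + d n) - q t) =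
        (∫ t in b..(b + d n), q t) - ∫ t in a..(a + d n), q t := by
      have l1 : ∫ t in a..b, q (t + d n) = ∫ t in (a + d n)..(b + d n), q t :=
        intervalIntegral.integral_comp_add_right q (d n)
      have l2 : (∫ t in a..(a + d n), q t) + ∫ t in (a + d n)..(b + d n), q t
          = ∫ t in a..(b + d n), q t :=
        intervalIntegral.integral_add_adjacent_intervals (hiq _ _) (hiq _ _)
      have l3 : (∫ t in a..b, q t) + ∫ t in b..(b + d n), q t = ∫ t in a..(b + d n), q t :=
        intervalIntegral.integral_add_adjacent_intervals (hiq _ _) (hiq _ _)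
      have hc2 : Continuous fun t : ℝ => q (t + d n) := hqc.comp (continuous_id.add continuous_const)
      rw [intervalIntegral.integral_sub (hc2.intervalIntegrable _ _) (hiq _ _), l1]
      linarith
    rw [e2]
    have hb1 : ∫ t in b..(b + d n), q t ≤ d n * q (b + d n) := by
      have := intervalIntegral.integral_mono_on (by linarith [hdpos n]) (hiq b (b + d n))
        (intervalIntegrable_const) (fun t ht => hmono ht.2)
      simpa [intervalIntegral.integral_const, smul_eq_mul] using this
    have hb2 : d n * q a ≤ ∫ t in a..(a + d n), q t := by
      have := intervalIntegral.integral_mono_on (by linarith [hdpos n])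
        (intervalIntegrable_const) (hiq a (a + d n)) (fun t ht => hmono ht.1)
      simpa [intervalIntegral.integral_const, smul_eq_mul] using this
    rw [div_le_iff₀ (hdpos n)]
    nlinarith [hdpos n]
  -- pass to the limit
  have lim1 : Filter.liminf (fun n => ∫⁻ t in Set.Icc a b, ENNReal.ofReal (u n t)) Filter.atTop
      ≤ ENNReal.ofReal (q b - q a) := by
    have htend : Tendsto (fun n => ENNReal.ofReal (q (b + d n) - q a)) Filter.atTop
        (𝓝 (ENNReal.ofReal (q b - q a))) := by
      apply (ENNReal.continuous_ofReal.tendsto _).comp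
      have : Tendsto (fun n : ℕ => b + d n) Filter.atTop (𝓝 b) := by
        have : Tendsto (fun n : ℕ => d n) Filter.atTop (𝓝 0) := by
          simpa [hd] using tendsto_one_div_add_atTop_nhds_zero_nat (𝕜 := ℝ)
        simpa using tendsto_const_nhds.add this
      exact ((hqc.tendsto b).comp this).sub tendsto_const_nhds
    calc Filter.liminf (fun n => ∫⁻ t in Set.Icc a b, ENNReal.ofReal (u n t)) Filter.atTop
        ≤ Filter.liminf (fun n => ENNReal.ofReal (q (b + d n) - q a)) Filter.atTop :=
          Filter.liminf_le_liminf (Filter.Eventually.of_forall compute)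
      _ = ENNReal.ofReal (q b - q a) := htend.liminf_eq
  have main : ∫⁻ t in Set.Icc a b, ENNReal.ofReal (deriv q t) ≤ ENNReal.ofReal (q b - q a) :=
    fatou.trans lim1
  -- convert to real integral
  have e3 : ∫ t in Set.Icc a b, deriv q t =
      (∫⁻ t in Set.Icc a b, ENNReal.ofReal (deriv q t)).toReal :=
    MeasureTheory.integral_eq_lintegral_of_nonneg_ae
      (Filter.Eventually.of_forall hd0) (measurable_deriv q).aestronglyMeasurable
  rw [e3]
  calc (∫⁻ t in Set.Icc a b, ENNReal.ofReal (deriv q t)).toReal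
      ≤ (ENNReal.ofReal (q b - q a)).toReal :=
        ENNReal.toReal_mono ENNReal.ofReal_ne_top main
    _ = q b - q a := ENNReal.toReal_ofReal (by linarith [hmono hab])

lemma lip_ftc (G : ℝ → ℝ) (M : ℝ) (hM : 0 ≤ M) (hG : LipschitzWith M.toNNReal G)
    (a b : ℝ) (hab : a ≤ b) :
    |G b - G a| ≤ ∫ t in Set.Icc a b, |deriv G t| := by
  have hlip : ∀ x y : ℝ, |G x - G y| ≤ M * |x - y| := by
    intro x y
    have := hG.dist_le_mul x y
    rwa [Real.dist_eq, Real.dist_eq, Real.coe_toNNReal M hM] at this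
  have hbound : ∀ t, |deriv G t| ≤ M := by
    intro t
    by_cases h : DifferentiableAt ℝ G t
    · refine abs_deriv_le hM h (Filter.Eventually.of_forall fun z => ?_)
      calc G z - G t ≤ |G z - G t| := le_abs_self _
        _ ≤ M * |z - t| := hlip z t
    · simpa [deriv_zero_of_not_differentiableAt h] using hM
  have hfin : IsFiniteMeasure (volume.restrict (Set.Icc a b)) := by
    constructor
    rw [Measure.restrict_apply_univ]
    exact measure_Icc_lt_top
  have hder : IntegrableOn (deriv G) (Set.Icc a b) := by
    refine ⟨(measurable_deriv G).aestronglyMeasurable, ?_⟩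
    exact MeasureTheory.HasFiniteIntegral.of_bounded (C := M)
      (Filter.Eventually.of_forall fun t => by simpa [Real.norm_eq_abs] using hbound t)
  have habs : IntegrableOn (fun t => |deriv G t|) (Set.Icc a b) := hder.abs
  have hconst : IntegrableOn (fun _ : ℝ => M) (Set.Icc a b) := integrableOn_const measure_Icc_lt_top.ne
  have hIC : ∫ _ in Set.Icc a b, M = M * (b - a) := by
    rw [MeasureTheory.integral_const, measureReal_def, Measure.restrict_apply_univ, Real.volume_Icc, smul_eq_mul,
      ENNReal.toReal_ofReal (by linarith)]
    ring
  have hGd := hG.ae_differentiableAt_real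
  -- q1
  have key : ∀ σ : ℝ, σ = 1 ∨ σ = -1 →
      ∫ t in Set.Icc a b, (M + σ * deriv G t) ≤ M * (b - a) + σ * (G b - G a) := by
    intro σ hσ
    set q : ℝ → ℝ := fun t => M * t + σ * G t with hq
    have hσ1 : |σ| = 1 := by rcases hσ with rfl | rfl <;> simp
    have hlq : LipschitzWith (M + M).toNNReal q := by
      apply LipschitzWith.of_dist_le_mul
      intro x y
      rw [Real.dist_eq, Real.dist_eq, Real.coe_toNNReal _ (by linarith)]
      have h1 : |σ * G x - σ * G y| = |G x - G y| := by
        rw [← mul_sub, abs_mul, hσ1, one_mul]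
      calc |q x - q y| = |(M * x - M * y) + (σ * G x - σ * G y)| := by simp only [hq]; ring_nf
        _ ≤ |M * x - M * y| + |σ * G x - σ * G y| := abs_add_le _ _
        _ ≤ M * |x - y| + M * |x - y| := by
            rw [h1, ← mul_sub, abs_mul, abs_of_nonneg hM]
            have := hlip x y
            linarith
        _ = (M + M) * |x - y| := by ring
    have hmq : Monotone q := by
      intro x y hxy
      have h1 := hlip y x
      have h2 : σ * G y - σ * G x ≥ -(M * (y - x)) := by
        have h3 : |σ * G y - σ * G x| ≤ M * (y - x) := by
          rw [← mul_sub, abs_mul, hσ1, one_mul]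
          calc |G y - G x| ≤ M * |y - x| := hlip y x
            _ = M * (y - x) := by rw [abs_of_nonneg (by linarith)]
        linarith [neg_abs_le (σ * G y - σ * G x)]
      simp only [hq]
      nlinarith
    have hd : ∀ᵐ t ∂(volume.restrict (Set.Icc a b)), deriv q t = M + σ * deriv G t := by
      refine ae_restrict_of_ae ?_
      filter_upwards [hGd] with t ht
      have h1 : HasDerivAt (fun s : ℝ => M * s) M t := by
        simpa using (hasDerivAt_id t).const_mul M
      have h2 : HasDerivAt q (M + σ * deriv G t) t :=
        h1.add ((ht.hasDerivAt.const_mul σ))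
      exact h2.deriv
    have := mono_ftc q ((M + M).toNNReal) hlq hmq a b hab
    have e1 : ∫ t in Set.Icc a b, deriv q t = ∫ t in Set.Icc a b, (M + σ * deriv G t) :=
      integral_congr_ae hd
    have e2 : q b - q a = M * (b - a) + σ * (G b - G a) := by simp only [hq]; ring
    rw [e1, e2] at this
    exact this
  have hi1 : IntegrableOn (fun t => deriv G t) (Set.Icc a b) := hder
  have hup := key 1 (Or.inl rfl)
  have hdn := key (-1) (Or.inr rfl)
  have es : ∀ σ : ℝ, ∫ t in Set.Icc a b, (M + σ * deriv G t) =
      M * (b - a) + σ * ∫ t in Set.Icc a b, deriv G t := by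
    intro σ
    rw [MeasureTheory.integral_add hconst (hi1.const_mul σ)]
    rw [MeasureTheory.integral_const_mul, hIC]
  rw [es 1] at hup
  rw [es (-1)] at hdn
  have hEq : G b - G a = ∫ t in Set.Icc a b, deriv G t := le_antisymm (by linarith) (by linarith)
  rw [hEq]
  simpa [Real.norm_eq_abs] using
    MeasureTheory.norm_integral_le_integral_norm (μ := volume.restrict (Set.Icc a b)) (deriv G)

end Aux

/-- On a uniformly locally radially quasi-convex metric space, for continuous f with
bounded ascendent slope and an arc-length parametrized rectifiable curve γ on [a,b],
f ∘ γ is differentiable a.e. and |f(γ(a)) - f(γ(b))| ≤ ∫_a^b |∂f|⁺(γ(t)) dt, i.e.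
|∂f|⁺ is an upper gradient of f. -/
theorem slope_upper_gradient {X : Type*} [MetricSpace X]
    (K : ℝ) (hK : 1 ≤ K)
    (hqc : ∀ x₀ : X, ∃ U ∈ 𝓝 x₀, ∀ y ∈ U, ∃ γ : ℝ → X,
      ContinuousOn γ (Set.Icc 0 1) ∧ γ 0 = x₀ ∧ γ 1 = y ∧
      (∀ t ∈ Set.Icc (0:ℝ) 1, γ t ∈ U) ∧
      eVariationOn γ (Set.Icc 0 1) ≤ ENNReal.ofReal (K * dist x₀ y))
    (f : X → ℝ) (hf : Continuous f) (hSL : (⨆ x, slopePlus f x) ≠ ⊤)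
    (a b : ℝ) (hab : a ≤ b) (γ : ℝ → X) (hγc : ContinuousOn γ (Set.Icc a b))
    (harc : ∀ s ∈ Set.Icc a b, eVariationOn γ (Set.Icc a s) = ENNReal.ofReal (s - a)) :
    (∀ᵐ t ∂(volume.restrict (Set.Icc a b)), DifferentiableAt ℝ (f ∘ γ) t)
    ∧ ENNReal.ofReal |f (γ a) - f (γ b)| ≤ ∫⁻ t in Set.Icc a b, slopePlus f (γ t) := by
  classical
  set C := ⨆ x, slopePlus f x with hC
  have hCtop : C ≠ ⊤ := hSL
  set M := C.toReal with hMdef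
  have hM0 : 0 ≤ M := ENNReal.toReal_nonneg
  have hslope_le : ∀ x, slopePlus f x ≤ C := fun x => le_iSup (slopePlus f) x
  -- γ is 1-Lipschitz on [a,b]
  have hγl : ∀ s ∈ Set.Icc a b, ∀ t ∈ Set.Icc a b, s ≤ t → dist (γ s) (γ t) ≤ t - s := by
    intro s hs t ht hst
    have h1 := eVariationOn.Icc_add_Icc γ (s := (Set.univ : Set ℝ)) hs.1 hst (Set.mem_univ s)
    simp only [Set.univ_inter] at h1
    rw [harc s hs, harc t ht] at h1
    have h2 : ENNReal.ofReal (t - a) = ENNReal.ofReal (s - a) + ENNReal.ofReal (t - s) := by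
      rw [← ENNReal.ofReal_add (by linarith [hs.1]) (by linarith)]
      ring_nf
    rw [h2] at h1
    have h3 : eVariationOn γ (Set.Icc s t) = ENNReal.ofReal (t - s) :=
      (ENNReal.add_right_inj ENNReal.ofReal_ne_top).1 h1
    have h4 := eVariationOn.edist_le γ (Set.left_mem_Icc.2 hst) (Set.right_mem_Icc.2 hst)
    rw [h3] at h4
    exact (edist_le_ofReal (by linarith)).1 h4
  have hγd : ∀ s ∈ Set.Icc a b, ∀ t ∈ Set.Icc a b, dist (γ s) (γ t) ≤ |t - s| := by
    intro s hs t ht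
    rcases le_total s t with h | h
    · rw [abs_of_nonneg (by linarith)]; exact hγl s hs t ht h
    · rw [abs_of_nonpos (by linarith), dist_comm]
      have := hγl t ht s hs h
      linarith
  set g : ℝ → ℝ := f ∘ γ with hgdef
  have hgc : ContinuousOn g (Set.Icc a b) := hf.comp_continuousOn hγc
  have hloc : ∀ x ∈ Set.Icc a b, ∀ ε > 0, ∀ᶠ z in 𝓝 x,
      z ∈ Set.Icc a b → g z - g x ≤ (M + ε) * |z - x| := by
    intro x hx ε hε
    have h1 : slopePlus f (γ x) < ENNReal.ofReal (M + ε) := by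
      refine lt_of_le_of_lt (hslope_le (γ x)) ?_
      rw [ENNReal.lt_ofReal_iff_toReal_lt hCtop]
      linarith
    obtain ⟨δ, hδ, H⟩ := slope_local f (γ x) (M + ε) h1
    filter_upwards [Metric.ball_mem_nhds x hδ] with z hz hzab
    have hd : dist (γ x) (γ z) ≤ |z - x| := hγd x hx z hzab
    have hd2 : dist (γ x) (γ z) < δ := lt_of_le_of_lt hd (by simpa [Real.dist_eq] using hz)
    calc g z - g x = f (γ z) - f (γ x) := rfl
      _ ≤ (M + ε) * dist (γ x) (γ z) := H (γ z) hd2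
      _ ≤ (M + ε) * |z - x| := mul_le_mul_of_nonneg_left hd (by linarith)
  have hlip : LipschitzOnWith (Real.toNNReal M) g (Set.Icc a b) :=
    lipOn g a b M hM0 hab hgc hloc
  obtain ⟨G, hGlip, hGeq⟩ := hlip.extend_real
  have hGd := hGlip.ae_differentiableAt_real
  have hne : ∀ᵐ t ∂(volume : Measure ℝ), t ≠ a ∧ t ≠ b := by
    have h0 : (volume : Measure ℝ) ({a, b} : Set ℝ) = 0 :=
      ((Set.finite_singleton b).insert a).measure_zero _
    rw [MeasureTheory.ae_iff]
    refine MeasureTheory.measure_mono_null ?_ h0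
    intro t ht
    simp only [Set.mem_setOf_eq, not_and_or, not_not] at ht
    rcases ht with rfl | rfl <;> simp
  have haes : ∀ᵐ t ∂(volume.restrict (Set.Icc a b)),
      t ∈ Set.Ioo a b ∧ DifferentiableAt ℝ G t := by
    filter_upwards [MeasureTheory.ae_restrict_mem measurableSet_Icc,
      MeasureTheory.ae_restrict_of_ae hne, MeasureTheory.ae_restrict_of_ae hGd] with t h1 h2 h3
    exact ⟨⟨lt_of_le_of_ne h1.1 (Ne.symm h2.1), lt_of_le_of_ne h1.2 h2.2⟩, h3⟩
  have hEqNhds : ∀ t ∈ Set.Ioo a b, (f ∘ γ) =ᶠ[𝓝 t] G := by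
    intro t ht
    filter_upwards [Ioo_mem_nhds ht.1 ht.2] with z hz
    exact hGeq (Set.Ioo_subset_Icc_self hz)
  constructor
  · filter_upwards [haes] with t ht
    exact ((hEqNhds t ht.1).differentiableAt_iff).2 ht.2
  · -- the pointwise bound
    have hptwise : ∀ᵐ t ∂(volume.restrict (Set.Icc a b)),
        ENNReal.ofReal |deriv G t| ≤ slopePlus f (γ t) := by
      filter_upwards [haes, MeasureTheory.ae_restrict_mem measurableSet_Icc] with t ht htIcc
      obtain ⟨htIoo, hdiff⟩ := ht
      have hLtop : slopePlus f (γ t) ≠ ⊤ :=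
        (lt_of_le_of_lt (hslope_le (γ t)) (lt_top_iff_ne_top.2 hCtop)).ne
      have habs : |deriv G t| ≤ (slopePlus f (γ t)).toReal := by
        refine le_of_forall_pos_le_add fun ε hε => ?_
        have h1 : slopePlus f (γ t) < ENNReal.ofReal ((slopePlus f (γ t)).toReal + ε) := by
          rw [ENNReal.lt_ofReal_iff_toReal_lt hLtop]
          linarith
        obtain ⟨δ, hδ, H⟩ := slope_local f (γ t) _ h1
        have hr0 : 0 ≤ (slopePlus f (γ t)).toReal + ε := by
          have := ENNReal.toReal_nonneg (a := slopePlus f (γ t)); linarith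
        refine abs_deriv_le hr0 hdiff ?_
        filter_upwards [Ioo_mem_nhds htIoo.1 htIoo.2, Metric.ball_mem_nhds t hδ] with z hz1 hz2
        have hzIcc : z ∈ Set.Icc a b := Set.Ioo_subset_Icc_self hz1
        have hd : dist (γ t) (γ z) ≤ |z - t| := hγd t htIcc z hzIcc
        have hd2 : dist (γ t) (γ z) < δ := lt_of_le_of_lt hd (by simpa [Real.dist_eq] using hz2)
        have he : G z - G t = f (γ z) - f (γ t) := by
          rw [← hGeq hzIcc, ← hGeq htIcc]; rfl
        rw [he]
        calc f (γ z) - f (γ t) ≤ ((slopePlus f (γ t)).toReal + ε) * dist (γ t) (γ z) :=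
              H (γ z) hd2
          _ ≤ ((slopePlus f (γ t)).toReal + ε) * |z - t| :=
              mul_le_mul_of_nonneg_left hd hr0
      calc ENNReal.ofReal |deriv G t| ≤ ENNReal.ofReal (slopePlus f (γ t)).toReal :=
            ENNReal.ofReal_le_ofReal habs
        _ = slopePlus f (γ t) := ENNReal.ofReal_toReal hLtop
    -- integrability of |deriv G|
    have hbound : ∀ t, |deriv G t| ≤ M := by
      intro t
      by_cases h : DifferentiableAt ℝ G t
      · refine abs_deriv_le hM0 h (Filter.Eventually.of_forall fun z => ?_)
        have := hGlip.dist_le_mul z t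
        rw [Real.dist_eq, Real.dist_eq, Real.coe_toNNReal M hM0] at this
        calc G z - G t ≤ |G z - G t| := le_abs_self _
          _ ≤ M * |z - t| := this
      · simpa [deriv_zero_of_not_differentiableAt h] using hM0
    have hfin : IsFiniteMeasure (volume.restrict (Set.Icc a b)) := by
      constructor
      rw [MeasureTheory.Measure.restrict_apply_univ]
      exact measure_Icc_lt_top
    have habsint : MeasureTheory.IntegrableOn (fun t => |deriv G t|) (Set.Icc a b) := by
      refine ⟨((measurable_deriv G).abs).aestronglyMeasurable, ?_⟩
      exact MeasureTheory.HasFiniteIntegral.of_bounded (C := M)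
        (Filter.Eventually.of_forall fun t => by simpa [Real.norm_eq_abs, abs_abs] using hbound t)
    have hftc := lip_ftc G M hM0 hGlip a b hab
    have hGa : G a = f (γ a) := (hGeq (Set.left_mem_Icc.2 hab)).symm
    have hGb : G b = f (γ b) := (hGeq (Set.right_mem_Icc.2 hab)).symm
    have e0 : |f (γ a) - f (γ b)| = |G b - G a| := by
      rw [hGa, hGb, abs_sub_comm]
    calc ENNReal.ofReal |f (γ a) - f (γ b)|
        = ENNReal.ofReal |G b - G a| := by rw [e0]
      _ ≤ ENNReal.ofReal (∫ t in Set.Icc a b, |deriv G t|) := ENNReal.ofReal_le_ofReal hftc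
      _ = ∫⁻ t in Set.Icc a b, ENNReal.ofReal |deriv G t| :=
          MeasureTheory.ofReal_integral_eq_lintegral_ofReal habsint
            (Filter.Eventually.of_forall fun t => abs_nonneg _)
      _ ≤ ∫⁻ t in Set.Icc a b, slopePlus f (γ t) := MeasureTheory.lintegral_mono_ae hptwise
end

section
/- Let C be a normed cone contained in a real vector space E. Define d_e(x,y) = ‖y-x| if y-x ∈ C and d_e(x,y) = +∞ otherwise. Then d_e is an extended quasi-metric on C (d_e(x,x)=0; d_e(x,y)=d_e(y,x)=0 implies x=y; triangle inequality with values in [0,∞]). Moreover, d_e takes only finite values on C × C if and only if C is a linear subspace of E. -/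
open scoped ENNReal Classical

/-- For a normed cone C in a real vector space E, d_e(x,y) = ‖y-x| if y-x ∈ C and
+∞ otherwise is an extended quasi-metric on C; it takes only finite values iff C
is a linear subspace of E. -/
theorem cone_extended_quasimetric {E : Type*} [AddCommGroup E] [Module ℝ E]
    (C : Set E) (h0 : (0:E) ∈ C)
    (hadd : ∀ x ∈ C, ∀ y ∈ C, x + y ∈ C)
    (hsmul : ∀ r : ℝ, 0 ≤ r → ∀ x ∈ C, r • x ∈ C)
    (n : E → ℝ) (hn0 : ∀ x ∈ C, 0 ≤ n x)
    (hnadd : ∀ x ∈ C, ∀ y ∈ C, n (x + y) ≤ n x + n y)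
    (hnzero : ∀ x ∈ C, (n x = 0 ↔ x = 0))
    (hnsmul : ∀ r : ℝ, 0 ≤ r → ∀ x ∈ C, n (r • x) = r * n x) :
    let de : E → E → ℝ≥0∞ := fun x y => if y - x ∈ C then ENNReal.ofReal (n (y - x)) else ⊤
    (∀ x ∈ C, de x x = 0) ∧
    (∀ x ∈ C, ∀ y ∈ C, de x y = 0 → de y x = 0 → x = y) ∧
    (∀ x ∈ C, ∀ y ∈ C, ∀ z ∈ C, de x z ≤ de x y + de y z) ∧
    ((∀ x ∈ C, ∀ y ∈ C, de x y ≠ ⊤) ↔ ∃ S : Submodule ℝ E, (S : Set E) = C) := by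
  intro de
  have hn00 : n 0 = 0 := (hnzero 0 h0).2 rfl
  refine ⟨?_, ?_, ?_, ?_⟩
  · intro x hx
    simp only [de, sub_self, if_pos h0, hn00, ENNReal.ofReal_zero]
  · intro x hx y hy h1 h2
    simp only [de] at h1
    split_ifs at h1 with hc
    · have hle : n (y - x) ≤ 0 := by
        by_contra hlt
        push_neg at hlt
        exact absurd h1 (by simp [ENNReal.ofReal_eq_zero]; linarith)
      have : n (y - x) = 0 := le_antisymm hle (hn0 _ hc)
      have := (hnzero _ hc).1 this
      exact (sub_eq_zero.mp this).symm
    · exact absurd h1 (by simp)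
  · intro x hx y hy z hz
    by_cases h1 : y - x ∈ C
    · by_cases h2 : z - y ∈ C
      · have h3 : z - x ∈ C := by
          have := hadd _ h1 _ h2
          rwa [show y - x + (z - y) = z - x by abel] at this
        simp only [de, if_pos h1, if_pos h2, if_pos h3]
        rw [← ENNReal.ofReal_add (hn0 _ h1) (hn0 _ h2)]
        apply ENNReal.ofReal_le_ofReal
        have := hnadd _ h1 _ h2
        rwa [show y - x + (z - y) = z - x by abel] at this
      · simp [de, if_neg h2]
    · simp [de, if_neg h1]
  · constructor
    · intro hfin
      have hneg : ∀ x ∈ C, -x ∈ C := by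
        intro x hx
        have := hfin x hx 0 h0
        simp only [de, zero_sub] at this
        by_contra hc
        exact this (if_neg hc)
      refine ⟨{ carrier := C
                add_mem' := fun {a b} ha hb => hadd a ha b hb
                zero_mem' := h0
                smul_mem' := ?_ }, rfl⟩
      intro r x hx
      rcases le_or_gt 0 r with hr | hr
      · exact hsmul r hr x hx
      · have : r • x = (-r) • (-x) := by simp
        rw [this]
        exact hsmul (-r) (by linarith) _ (hneg x hx)
    · rintro ⟨S, rfl⟩ x hx y hy
      have : y - x ∈ S := S.sub_mem hy hx
      simp [de, this]
end
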